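/- Let (X, M, Y) be a random element of ℝ^d × {0,1}^d × ℝ and let (X̂, Ŷ) be a random element of ℝ^d × ℝ with law Q. Fix m ∈ {0,1}^d with P(M = m) > 0. Let P*_m denote the conditional law of (mask(X, m), Y) given {M = m}, let Q*_m denote the law of (mask(X̂, m), Ŷ), let P_{XY} denote the law of (X, Y), and let P^m_{XY} denote the conditional law of (X, Y) given {M = m} (which is automatically absolutely continuous with respect to P_{XY}). Then 2·d_TV(P*_m, Q*_m) ≤ 2·d_TV(P_{XY}, Q) + E_{(x,y) ∼ P_{XY}}[ | (dP^m_{XY}/dP_{XY})(x,y) − 1 | ]. -/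

import Mathlib

open MeasureTheory ProbabilityTheory
open scoped ENNReal

universe u

/-- Measurable space structure on `Option α`, via the identification with `α ⊕ PUnit`. -/
instance optionMeasurableSpace {α : Type u} [MeasurableSpace α] : MeasurableSpace (Option α) :=
  MeasurableSpace.comap (Equiv.optionEquivSumPUnit.{0, u} α) inferInstance

/-- The `β`-quantile of the discrete distribution `∑ i, w i · δ_{v i}` on `ℝ ∪ {+∞}`:
`inf { z ∈ ℝ : ∑_{i : v i ≤ z} w i ≥ β }`, with `inf ∅ = +∞`. -/
noncomputable def wQuantile {ι : Type*} [Fintype ι] (β : ℝ) (w : ι → ℝ) (v : ι → EReal) : EReal :=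
  sInf {z : EReal | ∃ r : ℝ, z = (r : EReal) ∧
    β ≤ ∑ i ∈ Finset.univ.filter (fun i => v i ≤ (r : EReal)), w i}

/-- Total variation distance between two measures. -/
noncomputable def tvDist {Z : Type*} [MeasurableSpace Z] (P Q : Measure Z) : ℝ :=
  ⨆ A : {A : Set Z // MeasurableSet A}, |(P A.1).toReal - (Q A.1).toReal|

/-- The mask operator: coordinate `j` is `NA` (i.e. `none`) if `m j = true`, else `x j`. -/
def maskOp {d : ℕ} (x : Fin d → ℝ) (m : Fin d → Bool) : Fin d → Option ℝ :=
  fun j => if m j then none else some (x j)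

/-- The `β`-quantile of `(∑_{i=1}^n δ_{sc i} + δ_{+∞})/(n+1)`. -/
noncomputable def splitQuantile {n : ℕ} (β : ℝ) (sc : Fin n → ℝ) : EReal :=
  wQuantile β (fun _ : Option (Fin n) => 1 / (n + 1 : ℝ))
    (fun i => i.elim (⊤ : EReal) (fun j => ((sc j : ℝ) : EReal)))


lemma measurable_some'' {α : Type u} [MeasurableSpace α] :
    Measurable (fun a : α => (some a : Option α)) := by
  intro s hs
  obtain ⟨t, ht, rfl⟩ := hs
  exact measurable_inl ht

lemma measurable_maskOp' {d : ℕ} (m : Fin d → Bool) :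
    Measurable (fun x : Fin d → ℝ => maskOp x m) := by
  apply measurable_pi_lambda
  intro j
  by_cases h : m j
  · simp [maskOp, h]
  · simp only [maskOp, h, if_false]
    exact measurable_some''.comp (measurable_pi_apply j)

-- key TV lemma
lemma tv_aux {Z : Type*} [MeasurableSpace Z] (P Q : Measure Z) [IsProbabilityMeasure P]
    [IsProbabilityMeasure Q] (hPQ : P ≪ Q) {B : Set Z} (hB : MeasurableSet B) :
    2 * |(P B).toReal - (Q B).toReal| ≤ ∫ z, |(P.rnDeriv Q z).toReal - 1| ∂Q := by
  set g : Z → ℝ := fun z => (P.rnDeriv Q z).toReal - 1 with hg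
  have hint : Integrable g Q :=
    (Measure.integrable_toReal_rnDeriv).sub (integrable_const 1)
  have hset : ∀ (A : Set Z), MeasurableSet A →
      ∫ z in A, g z ∂Q = (P A).toReal - (Q A).toReal := by
    intro A hA
    rw [integral_sub (Measure.integrable_toReal_rnDeriv.restrict) (integrable_const 1)]
    have h1 : ∫ z in A, ((P.rnDeriv Q z).toReal) ∂Q = (P A).toReal := by
      rw [integral_toReal (Measure.measurable_rnDeriv P Q).aemeasurable.restrict
        (ae_restrict_of_ae (Measure.rnDeriv_lt_top P Q)),
        Measure.setLIntegral_rnDeriv hPQ]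
    rw [h1, setIntegral_const, smul_eq_mul, mul_one]; rfl
  have h1 := hset B hB
  have h2 := hset Bᶜ hB.compl
  have hcomplP : (P Bᶜ).toReal = 1 - (P B).toReal := by
    rw [prob_compl_eq_one_sub hB,
      ENNReal.toReal_sub_of_le prob_le_one ENNReal.one_ne_top, ENNReal.toReal_one]
  have hcomplQ : (Q Bᶜ).toReal = 1 - (Q B).toReal := by
    rw [prob_compl_eq_one_sub hB,
      ENNReal.toReal_sub_of_le prob_le_one ENNReal.one_ne_top, ENNReal.toReal_one]
  have htot : ∫ z, |g z| ∂Q = ∫ z in B, |g z| ∂Q + ∫ z in Bᶜ, |g z| ∂Q := by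
    rw [← integral_add_compl hB hint.abs]
  have hb1 : |(P B).toReal - (Q B).toReal| ≤ ∫ z in B, |g z| ∂Q := by
    rw [← h1, ← Real.norm_eq_abs]
    exact (norm_integral_le_integral_norm _).trans (le_of_eq (by simp [Real.norm_eq_abs]))
  have hb2 : |(P B).toReal - (Q B).toReal| ≤ ∫ z in Bᶜ, |g z| ∂Q := by
    have : |(P Bᶜ).toReal - (Q Bᶜ).toReal| = |(P B).toReal - (Q B).toReal| := by
      rw [hcomplP, hcomplQ]; rw [abs_sub_comm]; ring_nf
    rw [← this, ← h2, ← Real.norm_eq_abs]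
    exact (norm_integral_le_integral_norm _).trans (le_of_eq (by simp [Real.norm_eq_abs]))
  linarith

/-- Decomposition of the masked total-variation gap:
`2 d_TV(P*_m, Q*_m) ≤ 2 d_TV(P_XY, Q) + E_{P_XY}|dP^m_XY/dP_XY − 1|`, where `P*_m` is the
conditional law of `(mask(X,m), Y)` given `{M = m}`, `Q*_m` the law of `(mask(X̂,m), Ŷ)`,
`P_XY` the law of `(X, Y)` and `P^m_XY` its conditional version given `{M = m}`. -/
theorem masked_tv_decomposition
    (d : ℕ) (hd : 1 ≤ d)
    {Ω : Type*} [MeasurableSpace Ω] (μ : Measure Ω) [IsProbabilityMeasure μ]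
    (X : Ω → Fin d → ℝ) (M : Ω → Fin d → Bool) (Y : Ω → ℝ)
    (hX : Measurable X) (hM : Measurable M) (hY : Measurable Y)
    {Ω' : Type*} [MeasurableSpace Ω'] (ν : Measure Ω') [IsProbabilityMeasure ν]
    (Xh : Ω' → Fin d → ℝ) (Yh : Ω' → ℝ) (hXh : Measurable Xh) (hYh : Measurable Yh)
    (Q : Measure ((Fin d → ℝ) × ℝ)) (hQ : Q = Measure.map (fun x => (Xh x, Yh x)) ν)
    (m : Fin d → Bool) (hm : μ {x | M x = m} ≠ 0)
    (Pstar : Measure ((Fin d → Option ℝ) × ℝ))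
    (hPstar : Pstar = Measure.map (fun x => (maskOp (X x) m, Y x)) (μ[|{x | M x = m}]))
    (Qstar : Measure ((Fin d → Option ℝ) × ℝ))
    (hQstar : Qstar = Measure.map (fun x => (maskOp (Xh x) m, Yh x)) ν)
    (Pxy : Measure ((Fin d → ℝ) × ℝ))
    (hPxy : Pxy = Measure.map (fun x => (X x, Y x)) μ)
    (Pmxy : Measure ((Fin d → ℝ) × ℝ))
    (hPmxy : Pmxy = Measure.map (fun x => (X x, Y x)) (μ[|{x | M x = m}])) :
    2 * tvDist Pstar Qstar ≤
      2 * tvDist Pxy Q + ∫ z, |(Pmxy.rnDeriv Pxy z).toReal - 1| ∂Pxy := by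
  -- setup
  set S : Set Ω := {x | M x = m} with hSdef
  haveI hcond : IsProbabilityMeasure (μ[|S]) := cond_isProbabilityMeasure hm
  have hXY : Measurable (fun x => (X x, Y x)) := hX.prodMk hY
  have hXhYh : Measurable (fun x : Ω' => (Xh x, Yh x)) := hXh.prodMk hYh
  set T : (Fin d → ℝ) × ℝ → (Fin d → Option ℝ) × ℝ := fun p => (maskOp p.1 m, p.2) with hTdef
  have hT : Measurable T :=
    ((measurable_maskOp' m).comp measurable_fst).prodMk measurable_snd
  haveI : IsProbabilityMeasure Pxy := hPxy ▸ Measure.isProbabilityMeasure_map hXY.aemeasurable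
  haveI : IsProbabilityMeasure Pmxy := hPmxy ▸ Measure.isProbabilityMeasure_map hXY.aemeasurable
  haveI : IsProbabilityMeasure Q := hQ ▸ Measure.isProbabilityMeasure_map hXhYh.aemeasurable
  have hPstar' : Pstar = Measure.map T Pmxy := by
    rw [hPstar, hPmxy, Measure.map_map hT hXY]; rfl
  have hQstar' : Qstar = Measure.map T Q := by
    rw [hQstar, hQ, Measure.map_map hT hXhYh]; rfl
  have hac : Pmxy ≪ Pxy := by
    rw [hPmxy, hPxy]
    exact (cond_absolutelyContinuous).map hXY
  -- bounded above
  have hbdd : BddAbove (Set.range fun A : {A : Set ((Fin d → ℝ) × ℝ) // MeasurableSet A} =>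
      |(Pxy A.1).toReal - (Q A.1).toReal|) := by
    refine ⟨2, ?_⟩
    rintro r ⟨A, rfl⟩
    have h1 : (Pxy A.1).toReal ≤ 1 := by
      simpa using ENNReal.toReal_mono ENNReal.one_ne_top (prob_le_one (μ := Pxy) (s := A.1))
    have h2 : (Q A.1).toReal ≤ 1 := by
      simpa using ENNReal.toReal_mono ENNReal.one_ne_top (prob_le_one (μ := Q) (s := A.1))
    have := abs_sub_abs_le_abs_sub ((Pxy A.1).toReal) ((Q A.1).toReal)
    have := abs_sub ((Pxy A.1).toReal) ((Q A.1).toReal)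
    calc |(Pxy A.1).toReal - (Q A.1).toReal| ≤ |(Pxy A.1).toReal| + |(Q A.1).toReal| :=
          abs_sub _ _
      _ ≤ 2 := by
          rw [abs_of_nonneg ENNReal.toReal_nonneg, abs_of_nonneg ENNReal.toReal_nonneg]
          linarith
  set I : ℝ := ∫ z, |(Pmxy.rnDeriv Pxy z).toReal - 1| ∂Pxy with hIdef
  have key : ∀ A : {A : Set ((Fin d → Option ℝ) × ℝ) // MeasurableSet A},
      |(Pstar A.1).toReal - (Qstar A.1).toReal| ≤ tvDist Pxy Q + I / 2 := by
    intro A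
    have hB : MeasurableSet (T ⁻¹' A.1) := hT A.2
    have e1 : Pstar A.1 = Pmxy (T ⁻¹' A.1) := by rw [hPstar', Measure.map_apply hT A.2]
    have e2 : Qstar A.1 = Q (T ⁻¹' A.1) := by rw [hQstar', Measure.map_apply hT A.2]
    have t1 : |(Pxy (T ⁻¹' A.1)).toReal - (Q (T ⁻¹' A.1)).toReal| ≤ tvDist Pxy Q :=
      le_ciSup hbdd (⟨T ⁻¹' A.1, hB⟩ : {A : Set ((Fin d → ℝ) × ℝ) // MeasurableSet A})
    have t2 : 2 * |(Pmxy (T ⁻¹' A.1)).toReal - (Pxy (T ⁻¹' A.1)).toReal| ≤ I :=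
      tv_aux Pmxy Pxy hac hB
    rw [e1, e2]
    have := abs_sub_le ((Pmxy (T ⁻¹' A.1)).toReal) ((Pxy (T ⁻¹' A.1)).toReal)
      ((Q (T ⁻¹' A.1)).toReal)
    linarith [abs_nonneg ((Pmxy (T ⁻¹' A.1)).toReal - (Pxy (T ⁻¹' A.1)).toReal)]
  have htv : tvDist Pstar Qstar ≤ tvDist Pxy Q + I / 2 := ciSup_le key
  linarith
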